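/- For every prime p and every positive integer D, there exists n_0 such that for all n ≥ n_0 there is a p-ary function f : U_p^n → U_p with deg(f) > D and s(f) = √((p-1)·deg(f)). -/

import Mathlib

open scoped Classical

noncomputable section

/-- The primitive `m`-th root of unity `ε = e^{2πi/m}`. -/
def primRoot (m : ℕ) : ℂ := Complex.exp (2 * Real.pi * Complex.I / m)

/-- The bijection `k ↦ ε^k` from `ZMod m` onto the set `U_m` of `m`-th roots of unity;
vectors of `U_m^n` are modelled by their exponent vectors in `(ZMod m)^n`. -/
def uRoot (m : ℕ) (k : ZMod m) : ℂ := primRoot m ^ k.val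

/-- `F` represents the `m`-ary function `U_m^n → U_m` given in exponents by `g`,
i.e. the function `(ε^{x 1}, …, ε^{x n}) ↦ ε^{g x}`. -/
def RepresentsU (m n : ℕ) (F : MvPolynomial (Fin n) ℂ)
    (g : (Fin n → ZMod m) → ZMod m) : Prop :=
  ∀ x : Fin n → ZMod m, MvPolynomial.eval (fun i => uRoot m (x i)) F = uRoot m (g x)

/-- Degree of the `m`-ary function `U_m^n → U_m` given in exponents by `g`. -/
def degU (m n : ℕ) (g : (Fin n → ZMod m) → ZMod m) : ℕ :=
  sInf {d | ∃ F : MvPolynomial (Fin n) ℂ, RepresentsU m n F g ∧ F.totalDegree = d}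

/-- Local sensitivity of the `m`-ary function `U_m^n → U_m` given in exponents by `g`. -/
def localSensU (m n : ℕ) [NeZero m] (g : (Fin n → ZMod m) → ZMod m)
    (x : Fin n → ZMod m) : ℕ :=
  (Finset.univ.filter fun y : Fin n → ZMod m => hammingDist x y = 1 ∧ g y ≠ g x).card

/-- Sensitivity of the `m`-ary function `U_m^n → U_m` given in exponents by `g`. -/
def sensU (m n : ℕ) [NeZero m] (g : (Fin n → ZMod m) → ZMod m) : ℕ :=
  Finset.univ.sup (localSensU m n g)


lemma AO_prim (p : ℕ) (hp : p ≠ 0) : IsPrimitiveRoot (primRoot p) p := by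
  simpa [primRoot] using Complex.isPrimitiveRoot_exp p hp

lemma AO_sum_range (p : ℕ) (hp : p ≠ 0) (t : ℕ) :
    ∑ s ∈ Finset.range p, (primRoot p) ^ (t * s) = if p ∣ t then (p : ℂ) else 0 := by
  have hprim := AO_prim p hp
  by_cases h : p ∣ t
  · simp only [if_pos h]
    have : ∀ s ∈ Finset.range p, (primRoot p) ^ (t * s) = 1 := by
      intro s _
      rw [pow_mul, (hprim.pow_eq_one_iff_dvd t).2 h, one_pow]
    rw [Finset.sum_congr rfl this]
    simp
  · simp only [if_neg h]
    have hne : (primRoot p) ^ t ≠ 1 := fun hc => h ((hprim.pow_eq_one_iff_dvd t).1 hc)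
    have : ∑ s ∈ Finset.range p, (primRoot p) ^ (t * s) = ∑ s ∈ Finset.range p, ((primRoot p) ^ t) ^ s := by
      simp [pow_mul]
    rw [this, geom_sum_eq hne]
    rw [← pow_mul, mul_comm t p, pow_mul, hprim.pow_eq_one, one_pow, sub_self, zero_div]

lemma AO_sum_zmod (p : ℕ) [NeZero p] (t : ℕ) :
    ∑ a : ZMod p, (primRoot p) ^ (a.val * t) = if p ∣ t then (p : ℂ) else 0 := by
  rw [← AO_sum_range p (NeZero.ne p) t]
  refine Finset.sum_nbij' (fun (a : ZMod p) => a.val) (fun (s : ℕ) => (s : ZMod p)) ?_ ?_ ?_ ?_ ?_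
  · intro a _; exact Finset.mem_range.2 (ZMod.val_lt a)
  · intro s hs; exact Finset.mem_univ _
  · intro a _; simp [ZMod.natCast_val, ZMod.cast_id]
  · intro s hs; exact ZMod.val_cast_of_lt (Finset.mem_range.1 hs)
  · intro a _; rw [mul_comm]

lemma AO_sum_prod (p : ℕ) [NeZero p] (n : ℕ) (h : Fin n → ZMod p → ℂ) :
    ∑ x : Fin n → ZMod p, ∏ i, h i (x i) = ∏ i, ∑ a : ZMod p, h i a := by
  rw [Finset.prod_univ_sum]
  simp [Fintype.piFinset_univ]

lemma AO_deg_lb (p n : ℕ) [NeZero p] (hp2 : 2 ≤ p) (A : Finset (Fin n))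
    (g : (Fin n → ZMod p) → ZMod p)
    (hS : (∑ x : Fin n → ZMod p, uRoot p (g x) * ∏ i ∈ A, uRoot p (x i)) ≠ 0)
    (F : MvPolynomial (Fin n) ℂ) (hF : RepresentsU p n F g) :
    A.card * (p - 1) ≤ F.totalDegree := by
  classical
  have key : (∑ x : Fin n → ZMod p, uRoot p (g x) * ∏ i ∈ A, uRoot p (x i))
      = ∑ d ∈ F.support, F.coeff d *
        ∏ i, (if p ∣ (d i + if i ∈ A then 1 else 0) then (p:ℂ) else 0) := by
    have e1 : ∀ x : Fin n → ZMod p,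
        uRoot p (g x) * ∏ i ∈ A, uRoot p (x i)
        = ∑ d ∈ F.support, F.coeff d *
            ∏ i, (primRoot p) ^ ((x i).val * (d i + if i ∈ A then 1 else 0)) := by
      intro x
      rw [← hF x, MvPolynomial.eval_eq', Finset.sum_mul]
      refine Finset.sum_congr rfl fun d _ => ?_
      rw [mul_assoc]
      congr 1
      have : (∏ i ∈ A, uRoot p (x i)) = ∏ i, (primRoot p) ^ ((x i).val * (if i ∈ A then 1 else 0)) := by
        rw [← Finset.prod_subset (Finset.subset_univ A)
          (f := fun i => (primRoot p) ^ ((x i).val * (if i ∈ A then 1 else 0)))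
          (fun i _ hi => by simp [hi])]
        refine Finset.prod_congr rfl fun i hi => ?_
        simp [hi, uRoot]
      rw [this, ← Finset.prod_mul_distrib]
      refine Finset.prod_congr rfl fun i _ => ?_
      rw [uRoot, ← pow_mul, ← pow_add, ← Nat.mul_add]
    rw [Finset.sum_congr rfl fun x _ => e1 x, Finset.sum_comm]
    refine Finset.sum_congr rfl fun d _ => ?_
    rw [← Finset.mul_sum]
    congr 1
    rw [AO_sum_prod p n (fun i a => (primRoot p) ^ (a.val * (d i + if i ∈ A then 1 else 0)))]
    refine Finset.prod_congr rfl fun i _ => ?_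
    exact AO_sum_zmod p _
  rw [key] at hS
  obtain ⟨d, hdsup, hdne⟩ := Finset.exists_ne_zero_of_sum_ne_zero hS
  have hprod : (∏ i, (if p ∣ (d i + if i ∈ A then 1 else 0) then (p:ℂ) else 0)) ≠ 0 :=
    fun h => hdne (by rw [h, mul_zero])
  have hdi : ∀ i ∈ A, p - 1 ≤ d i := by
    intro i hi
    have := Finset.prod_ne_zero_iff.1 hprod i (Finset.mem_univ i)
    rw [if_pos hi] at this
    by_cases hdvd : p ∣ d i + 1
    · have : p ≤ d i + 1 := Nat.le_of_dvd (Nat.succ_pos _) hdvd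
      omega
    · rw [if_neg hdvd] at this; exact absurd rfl this
  have hsub : A ⊆ d.support := by
    intro i hi
    rw [Finsupp.mem_support_iff]
    have := hdi i hi
    omega
  calc A.card * (p - 1) = ∑ _i ∈ A, (p - 1) := by rw [Finset.sum_const, smul_eq_mul]
    _ ≤ ∑ i ∈ A, d i := Finset.sum_le_sum hdi
    _ ≤ ∑ i ∈ d.support, d i := Finset.sum_le_sum_of_subset hsub
    _ = d.sum fun _ e => e := rfl
    _ ≤ F.totalDegree := MvPolynomial.le_totalDegree hdsup

/-- blocks -/
def Bk (b k n : ℕ) (j : Fin k) : Finset (Fin n) :=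
  Finset.univ.filter fun i => i.val / b = j.val

def PAlive (p b k n : ℕ) (x : Fin n → ZMod p) : Prop :=
  ∀ j : Fin k, ∃ i ∈ Bk b k n j, x i ≠ 0

def gAO (p b k n : ℕ) : (Fin n → ZMod p) → ZMod p :=
  fun x => if PAlive p b k n x then 1 else 0

lemma AO_mem_Bk {b k n : ℕ} {j : Fin k} {i : Fin n} :
    i ∈ Bk b k n j ↔ i.val / b = j.val := by simp [Bk]

lemma AO_Bk_lt {b k n : ℕ} (hb : 0 < b) {j : Fin k} {i : Fin n}
    (hi : i ∈ Bk b k n j) : i.val < k * b := by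
  have h := AO_mem_Bk.1 hi
  have hlt : i.val / b < k := h ▸ j.isLt
  exact (Nat.div_lt_iff_lt_mul hb).1 hlt

lemma AO_Bk_card_le {b k n : ℕ} (hb : 0 < b) (j : Fin k) :
    (Bk b k n j).card ≤ b := by
  have : (Bk b k n j).card ≤ (Finset.range b).card := by
    refine Finset.card_le_card_of_injOn (fun i => i.val % b) ?_ ?_
    · intro i _; exact Finset.mem_range.2 (Nat.mod_lt _ hb)
    · intro i1 h1 i2 h2 he
      have he' : i1.val % b = i2.val % b := he
      have e1 := AO_mem_Bk.1 h1
      have e2 := AO_mem_Bk.1 h2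
      have d1 := Nat.div_add_mod i1.val b
      have d2 := Nat.div_add_mod i2.val b
      rw [e1] at d1
      rw [e2] at d2
      exact Fin.ext (by omega)
  simpa using this

lemma AO_rep_lt {b k n : ℕ} (hb : 0 < b) (hmn : k * b ≤ n) (j : Fin k) :
    j.val * b < n :=
  lt_of_lt_of_le ((Nat.mul_lt_mul_right hb).2 j.isLt) hmn

def repAO (b k n : ℕ) (hb : 0 < b) (hmn : k * b ≤ n) (j : Fin k) : Fin n :=
  ⟨j.val * b, AO_rep_lt hb hmn j⟩

lemma AO_rep_mem {b k n : ℕ} (hb : 0 < b) (hmn : k * b ≤ n) (j : Fin k) :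
    repAO b k n hb hmn j ∈ Bk b k n j := by
  rw [AO_mem_Bk]
  exact Nat.mul_div_cancel j.val hb

lemma AO_dist_one {p n : ℕ} [NeZero p] {x y : Fin n → ZMod p} (h : hammingDist x y = 1) :
    ∃ i, y i ≠ x i ∧ ∀ i', i' ≠ i → y i' = x i' := by
  rw [hammingDist] at h
  obtain ⟨a, ha⟩ := Finset.card_eq_one.1 h
  refine ⟨a, ?_, ?_⟩
  · have hmem : a ∈ Finset.univ.filter fun i => x i ≠ y i := ha ▸ Finset.mem_singleton_self a
    have := (Finset.mem_filter.1 hmem).2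
    exact fun hc => this hc.symm
  · intro i' hi'
    by_contra hc
    have : i' ∈ Finset.univ.filter fun i => x i ≠ y i :=
      Finset.mem_filter.2 ⟨Finset.mem_univ _, fun he => hc he.symm⟩
    rw [ha, Finset.mem_singleton] at this
    exact hi' this

lemma AO_gAO_eq_one {p b k n : ℕ} [NeZero p] {x : Fin n → ZMod p}
    (h : PAlive p b k n x) : gAO p b k n x = 1 := if_pos h

lemma AO_gAO_eq_zero {p b k n : ℕ} [NeZero p] {x : Fin n → ZMod p}
    (h : ¬ PAlive p b k n x) : gAO p b k n x = 0 := if_neg h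

lemma AO_sens_le (p b k n : ℕ) [NeZero p] (hp2 : 2 ≤ p) (hb : 0 < b) (hk : 0 < k)
    (hbk : b * (p - 1) ≤ k) (hmn : k * b ≤ n) (x : Fin n → ZMod p) :
    localSensU p n (gAO p b k n) x ≤ k := by
  classical
  haveI : Fact (1 < p) := ⟨hp2⟩
  have hn : 0 < n := lt_of_lt_of_le (Nat.mul_pos hk hb) hmn
  set s : Finset (Fin n → ZMod p) :=
    Finset.univ.filter fun y => hammingDist x y = 1 ∧ gAO p b k n y ≠ gAO p b k n x with hs
  rw [localSensU]
  -- the unique differing coordinate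
  let f : (Fin n → ZMod p) → Fin n := fun y =>
    if h : ∃ i, y i ≠ x i then Classical.choose h else ⟨0, hn⟩
  have hf : ∀ y ∈ s, y (f y) ≠ x (f y) ∧ ∀ i', i' ≠ f y → y i' = x i' := by
    intro y hy
    obtain ⟨-, hd, -⟩ := Finset.mem_filter.1 hy
    obtain ⟨i, hi1, hi2⟩ := AO_dist_one hd
    have hex : ∃ i, y i ≠ x i := ⟨i, hi1⟩
    have hch : y (Classical.choose hex) ≠ x (Classical.choose hex) := Classical.choose_spec hex
    have : Classical.choose hex = i := by
      by_contra hne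
      exact hch (hi2 _ hne)
    simp only [f, dif_pos hex, this]
    exact ⟨hi1, hi2⟩
  by_cases hPx : PAlive p b k n x
  · -- g x = 1 ; each sensitive y kills a unique block
    have key : ∀ y ∈ s, ∃ j : Fin k, (f y) ∈ Bk b k n j ∧ x (f y) ≠ 0 ∧ y (f y) = 0 ∧
        (∀ i' ∈ Bk b k n j, i' ≠ f y → x i' = 0) := by
      intro y hy
      obtain ⟨hfne, hfeq⟩ := hf y hy
      obtain ⟨-, -, hgne⟩ := Finset.mem_filter.1 hy
      have hPy : ¬ PAlive p b k n y := by
        intro hPy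
        exact hgne (by rw [AO_gAO_eq_one hPy, AO_gAO_eq_one hPx])
      rw [PAlive] at hPy
      push_neg at hPy
      obtain ⟨j, hj⟩ := hPy
      obtain ⟨iw, hiw, hiwx⟩ := hPx j
      have hiwf : iw = f y := by
        by_contra hne
        exact hiwx ((hfeq iw hne).symm.trans (hj iw hiw))
      refine ⟨j, hiwf ▸ hiw, hiwf ▸ hiwx, ?_, ?_⟩
      · rw [← hiwf]; exact hj iw hiw
      · intro i' hi' hne
        rw [← hfeq i' hne]; exact hj i' hi'
    -- map each y to the killed block
    have : s.card ≤ (Finset.univ : Finset (Fin k)).card := by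
      refine Finset.card_le_card_of_injOn
        (fun y => (⟨(f y).val / b % k, Nat.mod_lt _ hk⟩ : Fin k))
        (fun _ _ => Finset.mem_univ _) ?_
      intro y1 hy1 y2 hy2 he
      obtain ⟨j1, hm1, hx1, hy01, hu1⟩ := key y1 hy1
      obtain ⟨j2, hm2, hx2, hy02, hu2⟩ := key y2 hy2
      have hj1 : (f y1).val / b = j1.val := AO_mem_Bk.1 hm1
      have hj2 : (f y2).val / b = j2.val := AO_mem_Bk.1 hm2
      have hjj : j1 = j2 := by
        have h1 : (f y1).val / b % k = j1.val := by rw [hj1]; exact Nat.mod_eq_of_lt j1.isLt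
        have h2 : (f y2).val / b % k = j2.val := by rw [hj2]; exact Nat.mod_eq_of_lt j2.isLt
        have : (f y1).val / b % k = (f y2).val / b % k := congrArg Fin.val he
        exact Fin.ext (by omega)
      subst hjj
      have hieq : f y1 = f y2 := by
        by_contra hne
        exact hx2 (hu1 (f y2) hm2 (fun hc => hne hc.symm))
      obtain ⟨-, hfeq1⟩ := hf y1 hy1
      obtain ⟨-, hfeq2⟩ := hf y2 hy2
      funext i
      by_cases hi : i = f y1
      · rw [hi, hy01, hieq, hy02]
      · rw [hfeq1 i hi, hfeq2 i (hieq ▸ hi)]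
    simpa using this
  · -- g x = 0 ; there is a dead block j0 in x
    rw [PAlive] at hPx
    push_neg at hPx
    obtain ⟨j0, hj0⟩ := hPx
    have hj0' : ∀ i ∈ Bk b k n j0, x i = 0 := by
      intro i hi; have := hj0 i hi; simpa using this
    have hcard : s.card ≤ ((Bk b k n j0) ×ˢ (Finset.univ.erase (0 : ZMod p))).card := by
      refine Finset.card_le_card_of_injOn (fun y => (f y, y (f y))) ?_ ?_
      · intro y hy
        obtain ⟨hfne, hfeq⟩ := hf y hy
        obtain ⟨-, -, hgne⟩ := Finset.mem_filter.1 hy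
        have hPy : PAlive p b k n y := by
          by_contra hPy
          exact hgne (by rw [AO_gAO_eq_zero hPy, AO_gAO_eq_zero (by rw [PAlive]; push_neg; exact ⟨j0, hj0⟩)])
        obtain ⟨iw, hiw, hiwy⟩ := hPy j0
        have hiwf : iw = f y := by
          by_contra hne
          exact hiwy ((hfeq iw hne).trans (hj0' iw hiw))
        refine Finset.mem_product.2 ⟨?_, ?_⟩
        · show f y ∈ _
          rw [← hiwf]; exact hiw
        · show y (f y) ∈ _
          rw [← hiwf]; exact Finset.mem_erase.2 ⟨hiwy, Finset.mem_univ _⟩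
      · intro y1 hy1 y2 hy2 he
        have he1 : f y1 = f y2 := congrArg Prod.fst he
        have he2 : y1 (f y1) = y2 (f y2) := congrArg Prod.snd he
        obtain ⟨-, hfeq1⟩ := hf y1 hy1
        obtain ⟨-, hfeq2⟩ := hf y2 hy2
        funext i
        by_cases hi : i = f y1
        · rw [hi, he2, he1]
        · rw [hfeq1 i hi, hfeq2 i (he1 ▸ hi)]
    have : ((Bk b k n j0) ×ˢ (Finset.univ.erase (0 : ZMod p))).card ≤ b * (p - 1) := by
      rw [Finset.card_product, Finset.card_erase_of_mem (Finset.mem_univ _), Finset.card_univ,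
        ZMod.card]
      exact Nat.mul_le_mul (AO_Bk_card_le hb j0) (le_refl _)
    calc localSensU p n (gAO p b k n) x = s.card := rfl
      _ ≤ b * (p - 1) := le_trans hcard this
      _ ≤ k := hbk

def xCrit (p b k n : ℕ) [NeZero p] : Fin n → ZMod p :=
  fun i => if i.val < k * b ∧ i.val % b = 0 then 1 else 0

lemma AO_sens_ge (p b k n : ℕ) [NeZero p] (hp2 : 2 ≤ p) (hb : 0 < b) (hk : 0 < k)
    (hmn : k * b ≤ n) :
    k ≤ localSensU p n (gAO p b k n) (xCrit p b k n) := by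
  classical
  haveI : Fact (1 < p) := ⟨hp2⟩
  set x0 : Fin n → ZMod p := xCrit p b k n with hx0
  set s : Finset (Fin n → ZMod p) :=
    Finset.univ.filter fun y => hammingDist x0 y = 1 ∧ gAO p b k n y ≠ gAO p b k n x0 with hs
  have hx0rep : ∀ j : Fin k, x0 (repAO b k n hb hmn j) = 1 := by
    intro j
    have h1 : j.val * b < k * b := (Nat.mul_lt_mul_right hb).2 j.isLt
    have h2 : (j.val * b) % b = 0 := Nat.mul_mod_left _ _
    simp only [hx0, xCrit, repAO]
    rw [if_pos ⟨h1, h2⟩]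
  have hPx0 : PAlive p b k n x0 := by
    intro j
    refine ⟨repAO b k n hb hmn j, AO_rep_mem hb hmn j, ?_⟩
    rw [hx0rep j]
    exact one_ne_zero
  let Y : Fin k → (Fin n → ZMod p) := fun j => Function.update x0 (repAO b k n hb hmn j) 0
  have hYrep : ∀ j, Y j (repAO b k n hb hmn j) = 0 := by
    intro j; simp [Y]
  have hYother : ∀ j i, i ≠ repAO b k n hb hmn j → Y j i = x0 i := by
    intro j i hi; simp [Y, Function.update_of_ne hi]
  have hYmem : ∀ j, Y j ∈ s := by
    intro j
    refine Finset.mem_filter.2 ⟨Finset.mem_univ _, ?_, ?_⟩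
    · rw [hammingDist]
      have : (Finset.univ.filter fun i => x0 i ≠ Y j i) = {repAO b k n hb hmn j} := by
        ext i
        simp only [Finset.mem_filter, Finset.mem_univ, true_and, Finset.mem_singleton]
        constructor
        · intro hne
          by_contra hc
          exact hne (hYother j i hc).symm
        · intro he
          subst he
          rw [hYrep j, hx0rep j]
          exact one_ne_zero
      rw [this, Finset.card_singleton]
    · -- g (Y j) = 0 ≠ 1 = g x0
      have hdead : ¬ PAlive p b k n (Y j) := by
        intro hP
        obtain ⟨i, hiB, hine⟩ := hP j
        apply hine
        by_cases hc : i = repAO b k n hb hmn j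
        · rw [hc]; exact hYrep j
        · rw [hYother j i hc]
          simp only [hx0, xCrit]
          rw [if_neg]
          intro ⟨h1, h2⟩
          apply hc
          apply Fin.ext
          have hdiv := AO_mem_Bk.1 hiB
          have hdm := Nat.div_add_mod i.val b
          rw [hdiv] at hdm
          have hcm : b * j.val = j.val * b := Nat.mul_comm _ _
          simp only [repAO]
          omega
      rw [AO_gAO_eq_zero hdead, AO_gAO_eq_one hPx0]
      exact zero_ne_one
  have hYinj : Function.Injective Y := by
    intro j1 j2 he
    by_contra hne
    have hrepne : repAO b k n hb hmn j1 ≠ repAO b k n hb hmn j2 := by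
      intro hc
      apply hne
      apply Fin.ext
      have : j1.val * b = j2.val * b := congrArg Fin.val hc
      exact Nat.eq_of_mul_eq_mul_right hb this
    have h1 : Y j1 (repAO b k n hb hmn j1) = 0 := hYrep j1
    have h2 : Y j2 (repAO b k n hb hmn j1) = 1 := by
      rw [hYother j2 _ hrepne, hx0rep j1]
    rw [he, h2] at h1
    exact one_ne_zero h1
  have : (Finset.univ : Finset (Fin k)).card ≤ s.card := by
    refine Finset.card_le_card_of_injOn Y (fun j _ => hYmem j) ?_
    exact fun a _ b _ h => hYinj h
  exact (by simpa using this : k ≤ s.card)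

lemma AO_not_dvd_one {p : ℕ} (hp2 : 2 ≤ p) : ¬ p ∣ 1 := by
  intro h; have := Nat.le_of_dvd one_pos h; omega

lemma AO_sum_uRoot (p : ℕ) [NeZero p] (hp2 : 2 ≤ p) : ∑ a : ZMod p, uRoot p a = 0 := by
  have h := AO_sum_zmod p 1
  rw [if_neg (AO_not_dvd_one hp2)] at h
  simpa [uRoot] using h

lemma AO_ind_sum (p : ℕ) [NeZero p] :
    ∑ a : ZMod p, (if a = 0 then (1:ℂ) else 0) * uRoot p a = 1 := by
  rw [Finset.sum_congr rfl (fun a _ => by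
    show (if a = 0 then (1:ℂ) else 0) * uRoot p a = if a = 0 then uRoot p a else 0
    by_cases h : a = 0 <;> simp [h])]
  rw [Finset.sum_ite_eq' Finset.univ (0 : ZMod p) (fun a => uRoot p a)]
  simp [uRoot, ZMod.val_zero]

lemma AO_prod_indicator {n : ℕ} {M : Type*} [CommMonoid M] (A : Finset (Fin n)) (c : Fin n → M) :
    ∏ i ∈ A, c i = ∏ i : Fin n, (if i ∈ A then c i else 1) := by
  rw [Finset.prod_congr rfl (fun i hi => (if_pos hi).symm : ∀ i ∈ A, c i = if i ∈ A then c i else 1)]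
  exact Finset.prod_subset (Finset.subset_univ A) (fun i _ hi => if_neg hi)

lemma AO_uRoot_one (p : ℕ) [NeZero p] (hp2 : 2 ≤ p) : uRoot p 1 = primRoot p := by
  haveI : Fact (1 < p) := ⟨hp2⟩
  rw [uRoot, ZMod.val_one p, pow_one]

lemma AO_uRoot_g (p b k n : ℕ) [NeZero p] (hp2 : 2 ≤ p) (x : Fin n → ZMod p) :
    uRoot p (gAO p b k n x) =
      1 + (primRoot p - 1) *
        ∏ j : Fin k, (1 - ∏ i ∈ Bk b k n j, (if x i = 0 then (1:ℂ) else 0)) := by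
  by_cases h : PAlive p b k n x
  · rw [AO_gAO_eq_one h, AO_uRoot_one p hp2]
    have : ∀ j : Fin k, (1 - ∏ i ∈ Bk b k n j, (if x i = 0 then (1:ℂ) else 0)) = 1 := by
      intro j
      obtain ⟨i, hiB, hine⟩ := h j
      rw [Finset.prod_eq_zero hiB (if_neg hine : (if x i = 0 then (1:ℂ) else 0) = 0), sub_zero]
    rw [Finset.prod_congr rfl (fun j _ => this j), Finset.prod_const_one, mul_one]
    ring
  · rw [AO_gAO_eq_zero h, show uRoot p 0 = 1 by simp [uRoot, ZMod.val_zero]]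
    rw [PAlive] at h; push_neg at h
    obtain ⟨j, hj⟩ := h
    have : (1 - ∏ i ∈ Bk b k n j, (if x i = 0 then (1:ℂ) else 0)) = 0 := by
      rw [Finset.prod_eq_one (fun i hi => if_pos (hj i hi)), sub_self]
    rw [Finset.prod_eq_zero (Finset.mem_univ j) this, mul_zero, add_zero]

lemma AO_S_value (p b k n : ℕ) [NeZero p] (hp2 : 2 ≤ p) (hb : 0 < b) (hk : 0 < k)
    (hmn : k * b ≤ n) :
    ∑ x : Fin n → ZMod p, uRoot p (gAO p b k n x) *
        ∏ i ∈ Finset.univ.filter (fun i : Fin n => i.val < k * b), uRoot p (x i)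
      = (primRoot p - 1) * ((-1)^k *
          ∏ _i ∈ Finset.univ.filter (fun i : Fin n => ¬ i.val < k * b), (p : ℂ)) := by
  classical
  set A : Finset (Fin n) := Finset.univ.filter (fun i : Fin n => i.val < k * b) with hA
  set ind : ZMod p → ℂ := fun a => if a = 0 then 1 else 0 with hind
  have hBsubA : ∀ j : Fin k, Bk b k n j ⊆ A := by
    intro j i hi
    rw [hA, Finset.mem_filter]
    exact ⟨Finset.mem_univ _, AO_Bk_lt hb hi⟩
  -- Step 1 : rewrite the summand
  have step1 : ∀ x : Fin n → ZMod p,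
      uRoot p (gAO p b k n x) * ∏ i ∈ A, uRoot p (x i)
      = (∏ i ∈ A, uRoot p (x i)) + (primRoot p - 1) *
          ((∏ j : Fin k, (1 - ∏ i ∈ Bk b k n j, ind (x i))) * ∏ i ∈ A, uRoot p (x i)) := by
    intro x
    rw [AO_uRoot_g p b k n hp2 x]
    ring
  rw [Finset.sum_congr rfl (fun x _ => step1 x), Finset.sum_add_distrib, ← Finset.mul_sum]
  -- T1 = 0
  have hn : 0 < n := lt_of_lt_of_le (Nat.mul_pos hk hb) hmn
  have hT1 : ∑ x : Fin n → ZMod p, ∏ i ∈ A, uRoot p (x i) = 0 := by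
    rw [Finset.sum_congr rfl (fun x _ => AO_prod_indicator A (fun i => uRoot p (x i)))]
    rw [AO_sum_prod p n (fun i a => if i ∈ A then uRoot p a else 1)]
    have hi0 : (⟨0, hn⟩ : Fin n) ∈ A := by
      rw [hA, Finset.mem_filter]
      exact ⟨Finset.mem_univ _, Nat.mul_pos hk hb⟩
    refine Finset.prod_eq_zero (Finset.mem_univ (⟨0, hn⟩ : Fin n)) ?_
    rw [Finset.sum_congr rfl (fun a _ => if_pos hi0), AO_sum_uRoot p hp2]
  rw [hT1, zero_add]
  congr 1
  -- Step 2 : expand the product over blocks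
  have expand : ∀ x : Fin n → ZMod p,
      (∏ j : Fin k, (1 - ∏ i ∈ Bk b k n j, ind (x i)))
      = ∑ T ∈ (Finset.univ : Finset (Fin k)).powerset,
          (-1:ℂ)^T.card * ∏ j ∈ T, ∏ i ∈ Bk b k n j, ind (x i) := by
    intro x
    have h1 : ∀ j : Fin k, (1 - ∏ i ∈ Bk b k n j, ind (x i))
        = (-(∏ i ∈ Bk b k n j, ind (x i))) + 1 := fun j => by ring
    rw [Finset.prod_congr rfl (fun j _ => h1 j), Finset.prod_add]
    refine Finset.sum_congr rfl fun T _ => ?_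
    rw [Finset.prod_const_one, mul_one]
    rw [Finset.prod_congr rfl (fun j (_ : j ∈ T) => by
      show -∏ i ∈ Bk b k n j, ind (x i) = (-1) * ∏ i ∈ Bk b k n j, ind (x i)
      ring)]
    rw [Finset.prod_mul_distrib, Finset.prod_const]
  rw [Finset.sum_congr rfl (fun x _ => by rw [expand x, Finset.sum_mul])]
  rw [Finset.sum_comm]
  -- Evaluate the inner sum for each T
  have inner : ∀ T ∈ (Finset.univ : Finset (Fin k)).powerset,
      ∑ x : Fin n → ZMod p,
        (-1:ℂ)^T.card * (∏ j ∈ T, ∏ i ∈ Bk b k n j, ind (x i)) * ∏ i ∈ A, uRoot p (x i)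
      = if T = Finset.univ then
          (-1:ℂ)^k * ∏ _i ∈ Finset.univ.filter (fun i : Fin n => ¬ i.val < k * b), (p : ℂ)
        else 0 := by
    intro T _
    set U : Finset (Fin n) := T.biUnion (Bk b k n) with hU
    have hdisj : ∀ j1 ∈ T, ∀ j2 ∈ T, j1 ≠ j2 → Disjoint (Bk b k n j1) (Bk b k n j2) := by
      intro j1 _ j2 _ hne
      rw [Finset.disjoint_left]
      intro i h1 h2
      exact hne (Fin.ext ((AO_mem_Bk.1 h1).symm.trans (AO_mem_Bk.1 h2)))
    have hbi : ∀ x : Fin n → ZMod p,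
        (∏ j ∈ T, ∏ i ∈ Bk b k n j, ind (x i)) = ∏ i ∈ U, ind (x i) :=
      fun x => (Finset.prod_biUnion hdisj).symm
    have hUA : U ⊆ A := by
      intro i hi
      obtain ⟨j, _, hij⟩ := Finset.mem_biUnion.1 hi
      exact hBsubA j hij
    have hfact : ∀ x : Fin n → ZMod p,
        (∏ j ∈ T, ∏ i ∈ Bk b k n j, ind (x i)) * ∏ i ∈ A, uRoot p (x i)
        = ∏ i, ((if i ∈ U then ind (x i) else 1) * (if i ∈ A then uRoot p (x i) else 1)) := by
      intro x
      rw [hbi x, AO_prod_indicator U (fun i => ind (x i)),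
        AO_prod_indicator A (fun i => uRoot p (x i)), ← Finset.prod_mul_distrib]
    calc ∑ x : Fin n → ZMod p,
          (-1:ℂ)^T.card * (∏ j ∈ T, ∏ i ∈ Bk b k n j, ind (x i)) * ∏ i ∈ A, uRoot p (x i)
        = (-1:ℂ)^T.card * ∑ x : Fin n → ZMod p,
            ∏ i, ((if i ∈ U then ind (x i) else 1) * (if i ∈ A then uRoot p (x i) else 1)) := by
          rw [Finset.mul_sum]
          refine Finset.sum_congr rfl fun x _ => ?_
          rw [mul_assoc, hfact x]
      _ = (-1:ℂ)^T.card * ∏ i, ∑ a : ZMod p,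
            ((if i ∈ U then ind a else 1) * (if i ∈ A then uRoot p a else 1)) := by
          rw [AO_sum_prod p n (fun i a => (if i ∈ U then ind a else 1) * (if i ∈ A then uRoot p a else 1))]
      _ = if T = Finset.univ then
            (-1:ℂ)^k * ∏ _i ∈ Finset.univ.filter (fun i : Fin n => ¬ i.val < k * b), (p : ℂ)
          else 0 := by
          by_cases hT : T = Finset.univ
          · rw [if_pos hT]
            have hUA' : U = A := by
              apply Finset.Subset.antisymm hUA
              intro i hi
              rw [hA, Finset.mem_filter] at hi
              have hdiv : i.val / b < k := (Nat.div_lt_iff_lt_mul hb).2 hi.2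
              refine Finset.mem_biUnion.2 ⟨⟨i.val / b, hdiv⟩, ?_, AO_mem_Bk.2 rfl⟩
              rw [hT]; exact Finset.mem_univ _
            have hcard : T.card = k := by rw [hT]; simp
            rw [hcard, hUA']
            congr 1
            have : ∀ i : Fin n, (∑ a : ZMod p,
                ((if i ∈ A then ind a else 1) * (if i ∈ A then uRoot p a else 1)))
                = if i ∈ A then 1 else (p : ℂ) := by
              intro i
              by_cases hiA : i ∈ A
              · rw [if_pos hiA]
                rw [Finset.sum_congr rfl (fun a _ => by rw [if_pos hiA, if_pos hiA])]
                exact AO_ind_sum p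
              · rw [if_neg hiA]
                rw [Finset.sum_congr rfl (fun a _ => by rw [if_neg hiA, if_neg hiA, mul_one])]
                rw [Finset.sum_const, Finset.card_univ, ZMod.card, nsmul_eq_mul, mul_one]
            rw [Finset.prod_congr rfl (fun i _ => this i)]
            rw [Finset.prod_ite, Finset.prod_const_one, one_mul]
            refine Finset.prod_congr ?_ (fun _ _ => rfl)
            ext i
            simp [hA]
          · rw [if_neg hT]
            obtain ⟨j0, hj0⟩ : ∃ j0 : Fin k, j0 ∉ T := by
              by_contra hc
              push_neg at hc
              exact hT (Finset.eq_univ_iff_forall.2 hc)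
            set i0 : Fin n := repAO b k n hb hmn j0 with hi0
            have hi0A : i0 ∈ A := hBsubA j0 (AO_rep_mem hb hmn j0)
            have hi0U : i0 ∉ U := by
              intro hc
              obtain ⟨j, hjT, hij⟩ := Finset.mem_biUnion.1 hc
              have : j = j0 := Fin.ext ((AO_mem_Bk.1 hij).symm.trans (AO_mem_Bk.1 (AO_rep_mem hb hmn j0)))
              exact hj0 (this ▸ hjT)
            have : (∑ a : ZMod p, ((if i0 ∈ U then ind a else 1) * (if i0 ∈ A then uRoot p a else 1))) = 0 := by
              rw [Finset.sum_congr rfl (fun a _ => by rw [if_neg hi0U, if_pos hi0A, one_mul])]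
              exact AO_sum_uRoot p hp2
            rw [Finset.prod_eq_zero (Finset.mem_univ i0) this, mul_zero]
  rw [Finset.sum_congr rfl inner, Finset.sum_ite_eq' _ Finset.univ _]
  rw [if_pos (Finset.mem_powerset_self _)]

def F0 (p b k n : ℕ) : MvPolynomial (Fin n) ℂ :=
  1 + MvPolynomial.C (primRoot p - 1) *
    ∏ j : Fin k, (1 - ∏ i ∈ Bk b k n j,
      (MvPolynomial.C (p:ℂ)⁻¹ * ∑ t ∈ Finset.range p, (MvPolynomial.X i)^t))

lemma AO_F0_represents (p b k n : ℕ) [NeZero p] (hp2 : 2 ≤ p) :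
    RepresentsU p n (F0 p b k n) (gAO p b k n) := by
  intro x
  have hpc : (p : ℂ) ≠ 0 := Nat.cast_ne_zero.2 (NeZero.ne p)
  have key : ∀ i : Fin n,
      MvPolynomial.eval (fun i => uRoot p (x i))
        (MvPolynomial.C (p:ℂ)⁻¹ * ∑ t ∈ Finset.range p, (MvPolynomial.X i)^t)
      = if x i = 0 then (1:ℂ) else 0 := by
    intro i
    rw [map_mul, MvPolynomial.eval_C, map_sum]
    have : ∀ t ∈ Finset.range p,
        MvPolynomial.eval (fun i => uRoot p (x i)) ((MvPolynomial.X i)^t)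
        = (primRoot p) ^ ((x i).val * t) := by
      intro t _
      rw [map_pow, MvPolynomial.eval_X, uRoot, ← pow_mul]
    rw [Finset.sum_congr rfl this, AO_sum_range p (by omega) ((x i).val)]
    have hveq : (p ∣ (x i).val) ↔ x i = 0 := by
      constructor
      · intro h
        have hlt := ZMod.val_lt (x i)
        exact (ZMod.val_eq_zero _).1 (Nat.eq_zero_of_dvd_of_lt h hlt)
      · intro h; rw [h, ZMod.val_zero]; exact dvd_zero p
    by_cases hx : x i = 0
    · rw [if_pos (hveq.2 hx), if_pos hx, inv_mul_cancel₀ hpc]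
    · rw [if_neg (fun h => hx (hveq.1 h)), if_neg hx, mul_zero]
  rw [F0, map_add, map_one, map_mul, MvPolynomial.eval_C, map_prod]
  rw [Finset.prod_congr rfl (fun j (_ : j ∈ Finset.univ) => by
    rw [map_sub, map_one, map_prod, Finset.prod_congr rfl (fun i (_ : i ∈ Bk b k n j) => key i)])]
  exact (AO_uRoot_g p b k n hp2 x).symm

lemma AO_F0_degree (p b k n : ℕ) [NeZero p] (hp2 : 2 ≤ p) (hb : 0 < b) :
    (F0 p b k n).totalDegree ≤ k * b * (p - 1) := by
  have hfac : ∀ (i : Fin n),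
      (MvPolynomial.C (p:ℂ)⁻¹ * ∑ t ∈ Finset.range p, (MvPolynomial.X i)^t).totalDegree ≤ p - 1 := by
    intro i
    refine le_trans (MvPolynomial.totalDegree_mul _ _) ?_
    rw [MvPolynomial.totalDegree_C, zero_add]
    refine le_trans (MvPolynomial.totalDegree_finset_sum _ _) ?_
    refine Finset.sup_le fun t ht => ?_
    rw [MvPolynomial.totalDegree_X_pow]
    have := Finset.mem_range.1 ht
    omega
  have hblk : ∀ j : Fin k,
      (1 - ∏ i ∈ Bk b k n j,
        (MvPolynomial.C (p:ℂ)⁻¹ * ∑ t ∈ Finset.range p, (MvPolynomial.X i)^t)).totalDegree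
      ≤ b * (p - 1) := by
    intro j
    refine le_trans (MvPolynomial.totalDegree_sub _ _) ?_
    rw [MvPolynomial.totalDegree_one]
    refine max_le (Nat.zero_le _) ?_
    refine le_trans (MvPolynomial.totalDegree_finset_prod _ _) ?_
    have h1 : ∑ i ∈ Bk b k n j, (MvPolynomial.C (p:ℂ)⁻¹ * ∑ t ∈ Finset.range p, (MvPolynomial.X i)^t).totalDegree
        ≤ ∑ _i ∈ Bk b k n j, (p - 1) := Finset.sum_le_sum (fun i _ => hfac i)
    have h2 : ∑ _i ∈ Bk b k n j, (p - 1) = (Bk b k n j).card * (p - 1) := by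
      rw [Finset.sum_const, smul_eq_mul]
    have h3 : (Bk b k n j).card * (p - 1) ≤ b * (p - 1) :=
      Nat.mul_le_mul_right _ (AO_Bk_card_le hb j)
    omega
  rw [F0]
  refine le_trans (MvPolynomial.totalDegree_add _ _) ?_
  rw [MvPolynomial.totalDegree_one]
  refine max_le (Nat.zero_le _) ?_
  refine le_trans (MvPolynomial.totalDegree_mul _ _) ?_
  rw [MvPolynomial.totalDegree_C, zero_add]
  refine le_trans (MvPolynomial.totalDegree_finset_prod _ _) ?_
  have h1 : ∑ j : Fin k, (1 - ∏ i ∈ Bk b k n j,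
          (MvPolynomial.C (p:ℂ)⁻¹ * ∑ t ∈ Finset.range p, (MvPolynomial.X i)^t)).totalDegree
      ≤ ∑ _j : Fin k, b * (p - 1) := Finset.sum_le_sum (fun j _ => hblk j)
  have h2 : ∑ _j : Fin k, b * (p - 1) = k * (b * (p - 1)) := by
    rw [Finset.sum_const, smul_eq_mul, Finset.card_univ, Fintype.card_fin]
  have h3 : k * (b * (p - 1)) = k * b * (p - 1) := by ring
  omega

lemma AO_card_A {n m : ℕ} (hmn : m ≤ n) :
    (Finset.univ.filter (fun i : Fin n => i.val < m)).card = m := by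
  have : Finset.univ.filter (fun i : Fin n => i.val < m)
      = Finset.map (Fin.castLEEmb hmn) Finset.univ := by
    ext i
    simp only [Finset.mem_filter, Finset.mem_univ, true_and, Finset.mem_map]
    constructor
    · intro hi
      refine ⟨⟨i.val, hi⟩, ?_⟩
      ext
      simp
    · rintro ⟨t, rfl⟩
      simpa using t.isLt
  rw [this, Finset.card_map, Finset.card_univ, Fintype.card_fin]



theorem stmt16 (p : ℕ) [NeZero p] (hp : p.Prime) (D : ℕ) (hD : 0 < D) :
    ∃ n0 : ℕ, ∀ n : ℕ, n0 ≤ n →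
      ∃ g : (Fin n → ZMod p) → ZMod p,
        D < degU p n g ∧
        (sensU p n g : ℝ) = Real.sqrt (((p : ℝ) - 1) * (degU p n g : ℝ)) := by
  classical
  have hp2 : 2 ≤ p := hp.two_le
  set q : ℕ := p - 1 with hqdef
  have hq1 : 1 ≤ q := by omega
  set b : ℕ := D + 1 with hbdef
  have hb : 0 < b := by omega
  set k : ℕ := b * q * q with hkdef
  have hk : 0 < k := by positivity
  have hbk : b * (p - 1) ≤ k := by
    rw [hkdef, ← hqdef]
    calc b * q = b * q * 1 := (mul_one _).symm
      _ ≤ b * q * q := Nat.mul_le_mul_left _ hq1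
  refine ⟨k * b, fun n hmn => ?_⟩
  refine ⟨gAO p b k n, ?_⟩
  -- degree computation
  set A : Finset (Fin n) := Finset.univ.filter (fun i : Fin n => i.val < k * b) with hA
  have hcardA : A.card = k * b := AO_card_A hmn
  have hSne : (∑ x : Fin n → ZMod p, uRoot p (gAO p b k n x) *
      ∏ i ∈ A, uRoot p (x i)) ≠ 0 := by
    rw [hA, AO_S_value p b k n hp2 hb hk hmn]
    have hζ : primRoot p - 1 ≠ 0 := by
      have := (AO_prim p (NeZero.ne p)).ne_one hp2
      intro hc
      exact this (by linear_combination hc)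
    have hpc : (p : ℂ) ≠ 0 := Nat.cast_ne_zero.2 (NeZero.ne p)
    refine mul_ne_zero hζ (mul_ne_zero (pow_ne_zero _ (by norm_num)) ?_)
    exact Finset.prod_ne_zero_iff.2 (fun _ _ => hpc)
  have hlb : ∀ d ∈ {d | ∃ F : MvPolynomial (Fin n) ℂ,
      RepresentsU p n F (gAO p b k n) ∧ F.totalDegree = d}, k * b * (p - 1) ≤ d := by
    rintro d ⟨F, hFrep, rfl⟩
    have := AO_deg_lb p n hp2 A (gAO p b k n) hSne F hFrep
    rwa [hcardA] at this
  have hne : {d | ∃ F : MvPolynomial (Fin n) ℂ,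
      RepresentsU p n F (gAO p b k n) ∧ F.totalDegree = d}.Nonempty :=
    ⟨(F0 p b k n).totalDegree, F0 p b k n, AO_F0_represents p b k n hp2, rfl⟩
  have hdeg : degU p n (gAO p b k n) = k * b * (p - 1) := by
    refine le_antisymm ?_ ?_
    · refine le_trans (Nat.sInf_le ⟨F0 p b k n, AO_F0_represents p b k n hp2, rfl⟩) ?_
      exact AO_F0_degree p b k n hp2 hb
    · exact hlb _ (Nat.sInf_mem hne)
  have hsens : sensU p n (gAO p b k n) = k := by
    refine le_antisymm ?_ ?_
    · exact Finset.sup_le (fun x _ => AO_sens_le p b k n hp2 hb hk hbk hmn x)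
    · exact le_trans (AO_sens_ge p b k n hp2 hb hk hmn)
        (Finset.le_sup (Finset.mem_univ (xCrit p b k n)))
  constructor
  · rw [hdeg]
    have : b ≤ k * b * (p - 1) := by
      rw [← hqdef]
      calc b = 1 * b * 1 := by ring
        _ ≤ k * b * q := Nat.mul_le_mul (Nat.mul_le_mul hk (le_refl b)) hq1
    omega
  · rw [hdeg, hsens]
    have hcast : ((p : ℝ) - 1) = (q : ℝ) := by
      rw [hqdef]
      push_cast [Nat.cast_sub (by omega : 1 ≤ p)]
      ring
    have harg : ((p : ℝ) - 1) * ((k * b * (p - 1) : ℕ) : ℝ) = ((k : ℕ) : ℝ)^2 := by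
      rw [hcast, hkdef, ← hqdef]
      push_cast
      ring
    rw [harg, Real.sqrt_sq (by positivity)]
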